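/- Let d ≥ 1 and let l : ℝ^d → ℝ be measurable. Suppose there exist a constant k ∈ ℝ and a vector δ ∈ ℝ^d such that l(α) ≤ k + δᵀα for all α ∈ ℝ^d. Let p(α) = N(α|μ, Q⁻¹) with Q symmetric positive definite, let g(α) = N(α|μ*, Q*⁻¹) with Q* symmetric positive definite, and define the importance weight ω(α) = exp(l(α)) p(α) / g(α). Let n > 0 be a real number. If Q* − n(Q* − Q) ≻ 0, then for every real m with 0 ≤ m ≤ n the integral ∫_{ℝ^d} ω(α)^m g(α) dα is finite. -/

import Mathlib

open MeasureTheory Matrix Filter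

/-- The Gaussian density `N(·|μ, P⁻¹)` on `ℝ^d` with mean `μ` and precision matrix `P`. -/
noncomputable def gaussDensity {d : ℕ} (μ : Fin d → ℝ) (P : Matrix (Fin d) (Fin d) ℝ)
    (α : Fin d → ℝ) : ℝ :=
  (2 * Real.pi) ^ (-(d : ℝ) / 2) * Real.sqrt P.det *
    Real.exp (-(1 / 2) * ((α - μ) ⬝ᵥ P.mulVec (α - μ)))

private theorem dot_symm {d : ℕ} (M : Matrix (Fin d) (Fin d) ℝ) (hM : M.IsHermitian)
    (x y : Fin d → ℝ) : x ⬝ᵥ M.mulVec y = y ⬝ᵥ M.mulVec x := by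
  have hMt : Mᵀ = M := by
    rw [← Matrix.conjTranspose_eq_transpose_of_trivial]; exact hM
  rw [Matrix.dotProduct_mulVec, ← hMt, Matrix.vecMul_transpose, dotProduct_comm, hMt]

private theorem quad_expand {d : ℕ} (M : Matrix (Fin d) (Fin d) ℝ) (hM : M.IsHermitian)
    (x ν : Fin d → ℝ) :
    (x - ν) ⬝ᵥ M.mulVec (x - ν)
      = x ⬝ᵥ M.mulVec x - 2 * (M.mulVec ν ⬝ᵥ x) + ν ⬝ᵥ M.mulVec ν := by
  rw [Matrix.mulVec_sub, sub_dotProduct, dotProduct_sub, dotProduct_sub]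
  have h1 : x ⬝ᵥ M.mulVec ν = M.mulVec ν ⬝ᵥ x := dotProduct_comm _ _
  have h2 : ν ⬝ᵥ M.mulVec x = M.mulVec ν ⬝ᵥ x := by
    rw [dot_symm M hM ν x, dotProduct_comm]
  rw [h1, h2]; ring

private theorem posdef_lb {d : ℕ} (hd : 1 ≤ d) (A : Matrix (Fin d) (Fin d) ℝ) (hA : A.PosDef) :
    ∃ c > 0, ∀ x : Fin d → ℝ, c * ∑ i, x i ^ 2 ≤ x ⬝ᵥ A.mulVec x := by
  have hcont : Continuous fun x : Fin d → ℝ => x ⬝ᵥ A.mulVec x := by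
    simp only [dotProduct, Matrix.mulVec]; fun_prop
  haveI : Nonempty (Fin d) := ⟨⟨0, hd⟩⟩
  have hS : IsCompact (Metric.sphere (0 : Fin d → ℝ) 1) := isCompact_sphere _ _
  have hne : (Metric.sphere (0 : Fin d → ℝ) 1).Nonempty :=
    NormedSpace.sphere_nonempty.2 zero_le_one
  obtain ⟨x₀, hx₀S, hx₀min⟩ := hS.exists_isMinOn hne hcont.continuousOn
  have hx₀ : x₀ ≠ 0 := by
    intro h
    rw [Metric.mem_sphere, h, dist_self] at hx₀S
    norm_num at hx₀S
  have hc0 : 0 < x₀ ⬝ᵥ A.mulVec x₀ := by have := hA.dotProduct_mulVec_pos hx₀; rwa [star_trivial] at this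
  set c0 := x₀ ⬝ᵥ A.mulVec x₀ with hc0def
  have hbd : ∀ x : Fin d → ℝ, c0 * ‖x‖ ^ 2 ≤ x ⬝ᵥ A.mulVec x := by
    intro x
    rcases eq_or_ne x 0 with rfl | hx
    · simp
    · have hn : (0:ℝ) < ‖x‖ := norm_pos_iff.2 hx
      have hy : (‖x‖⁻¹ • x) ∈ Metric.sphere (0 : Fin d → ℝ) 1 := by
        simp [norm_smul, abs_of_pos (inv_pos.2 hn), inv_mul_cancel₀ hn.ne']
      have hmin := hx₀min hy
      simp only [Set.mem_setOf_eq] at hmin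
      have hq : (‖x‖⁻¹ • x) ⬝ᵥ A.mulVec (‖x‖⁻¹ • x) = ‖x‖⁻¹ * ‖x‖⁻¹ * (x ⬝ᵥ A.mulVec x) := by
        rw [Matrix.mulVec_smul, dotProduct_smul, smul_dotProduct]
        simp [smul_eq_mul]; ring
      rw [hq] at hmin
      have h2 : c0 * ‖x‖^2 ≤ (‖x‖⁻¹ * ‖x‖⁻¹ * (x ⬝ᵥ A.mulVec x)) * ‖x‖^2 := by
        have := mul_le_mul_of_nonneg_right hmin (by positivity : (0:ℝ) ≤ ‖x‖^2)
        linarith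
      calc c0 * ‖x‖^2 ≤ (‖x‖⁻¹ * ‖x‖⁻¹ * (x ⬝ᵥ A.mulVec x)) * ‖x‖^2 := h2
        _ = x ⬝ᵥ A.mulVec x := by
            rw [show ‖x‖⁻¹ * ‖x‖⁻¹ * (x ⬝ᵥ A.mulVec x) * ‖x‖^2
              = (x ⬝ᵥ A.mulVec x) * (‖x‖ * ‖x‖⁻¹) * (‖x‖ * ‖x‖⁻¹) by ring,
              mul_inv_cancel₀ hn.ne', mul_one, mul_one]
  refine ⟨c0 / d, by positivity, fun x => ?_⟩
  have hsum : ∑ i, x i ^ 2 ≤ d * ‖x‖ ^ 2 := by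
    calc ∑ i, x i ^ 2 ≤ ∑ _i : Fin d, ‖x‖ ^ 2 := by
          apply Finset.sum_le_sum
          intro i _
          have h := norm_le_pi_norm x i
          have : |x i| ≤ ‖x‖ := by simpa using h
          nlinarith [abs_nonneg (x i), sq_abs (x i)]
      _ = d * ‖x‖ ^ 2 := by simp [mul_comm]
  have hd0 : (0:ℝ) < d := by exact_mod_cast hd
  calc c0 / d * ∑ i, x i ^ 2 ≤ c0 / d * (d * ‖x‖^2) := by
        apply mul_le_mul_of_nonneg_left hsum (by positivity)
    _ = c0 * ‖x‖^2 := by field_simp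
    _ ≤ x ⬝ᵥ A.mulVec x := hbd x

private theorem integrable_exp_linear_sub_sq (b : ℝ) (hb : 0 < b) (v : ℝ) :
    Integrable (fun t : ℝ => Real.exp (v * t - b * t ^ 2)) := by
  have heq : (fun t : ℝ => Real.exp (v * t - b * t ^ 2))
      = fun t => Real.exp (v ^ 2 / (4 * b)) * Real.exp (-b * (t - v / (2 * b)) ^ 2) := by
    funext t
    rw [← Real.exp_add]
    congr 1
    field_simp
    ring
  rw [heq]
  exact ((integrable_exp_neg_mul_sq hb).comp_sub_right (v / (2 * b))).const_mul _

theorem stmt1 (d : ℕ) (hd : 1 ≤ d) (l : (Fin d → ℝ) → ℝ) (hl : Measurable l)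
    (k : ℝ) (δ : Fin d → ℝ) (hbound : ∀ α, l α ≤ k + δ ⬝ᵥ α)
    (μ μs : Fin d → ℝ) (Q Qs : Matrix (Fin d) (Fin d) ℝ)
    (hQ : Q.PosDef) (hQs : Qs.PosDef)
    (n : ℝ) (hn : 0 < n)
    (hpd : (Qs - n • (Qs - Q)).PosDef) :
    ∀ m : ℝ, 0 ≤ m → m ≤ n →
      ∫⁻ α, ENNReal.ofReal
        ((Real.exp (l α) * gaussDensity μ Q α / gaussDensity μs Qs α) ^ m *
          gaussDensity μs Qs α) < ⊤ := by
  intro m hm hmn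
  -- positivity of normalizing constants
  set c₁ : ℝ := (2 * Real.pi) ^ (-(d : ℝ) / 2) * Real.sqrt Q.det with hc₁def
  set c₂ : ℝ := (2 * Real.pi) ^ (-(d : ℝ) / 2) * Real.sqrt Qs.det with hc₂def
  have h2pi : (0:ℝ) < (2 * Real.pi) ^ (-(d : ℝ) / 2) :=
    Real.rpow_pos_of_pos (by positivity) _
  have hc₁ : 0 < c₁ := mul_pos h2pi (Real.sqrt_pos.2 hQ.det_pos)
  have hc₂ : 0 < c₂ := mul_pos h2pi (Real.sqrt_pos.2 hQs.det_pos)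
  -- the quadratic exponents
  set u : (Fin d → ℝ) → ℝ := fun α => -(1/2) * ((α - μ) ⬝ᵥ Q.mulVec (α - μ)) with hudef
  set v : (Fin d → ℝ) → ℝ := fun α => -(1/2) * ((α - μs) ⬝ᵥ Qs.mulVec (α - μs)) with hvdef
  -- the combined precision matrix
  set A : Matrix (Fin d) (Fin d) ℝ := m • Q + (1 - m) • Qs with hAdef
  have hAH : A.IsHermitian := by
    have h1 : (m • Q).IsHermitian := by
      unfold Matrix.IsHermitian
      rw [Matrix.conjTranspose_smul, hQ.1.eq]; simp
    have h2 : ((1 - m) • Qs).IsHermitian := by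
      unfold Matrix.IsHermitian
      rw [Matrix.conjTranspose_smul, hQs.1.eq]; simp
    exact h1.add h2
  have hA : A.PosDef := by
    refine Matrix.PosDef.of_dotProduct_mulVec_pos hAH fun x hx => ?_
    simp only [star_trivial]
    have ht : 0 < x ⬝ᵥ Qs.mulVec x := by have := hQs.dotProduct_mulVec_pos hx; rwa [star_trivial] at this
    have hb' : 0 < x ⬝ᵥ (Qs - n • (Qs - Q)).mulVec x := by have := hpd.dotProduct_mulVec_pos hx; rwa [star_trivial] at this
    have hexp : x ⬝ᵥ (Qs - n • (Qs - Q)).mulVec x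
        = x ⬝ᵥ Qs.mulVec x - n * (x ⬝ᵥ Qs.mulVec x - x ⬝ᵥ Q.mulVec x) := by
      rw [Matrix.sub_mulVec, Matrix.smul_mulVec, Matrix.sub_mulVec,
        dotProduct_sub, dotProduct_smul, dotProduct_sub]
      simp [smul_eq_mul]
    rw [hexp] at hb'
    have hquad : x ⬝ᵥ A.mulVec x
        = m * (x ⬝ᵥ Q.mulVec x) + (1 - m) * (x ⬝ᵥ Qs.mulVec x) := by
      rw [hAdef, Matrix.add_mulVec, Matrix.smul_mulVec, Matrix.smul_mulVec,
        dotProduct_add, dotProduct_smul, dotProduct_smul]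
      simp [smul_eq_mul]
    rw [hquad]
    rcases hm.eq_or_lt with rfl | hm'
    · simpa using ht
    · nlinarith [mul_pos hm' hb', mul_nonneg (sub_nonneg.2 hmn) ht.le]
  obtain ⟨c, hc, hcq⟩ := posdef_lb hd A hA
  -- linear and constant pieces
  set w : Fin d → ℝ := m • Q.mulVec μ + (1 - m) • Qs.mulVec μs with hwdef
  set K : ℝ := m * (μ ⬝ᵥ Q.mulVec μ) + (1 - m) * (μs ⬝ᵥ Qs.mulVec μs) with hKdef
  set b : Fin d → ℝ := fun i => m * δ i + w i with hbdef
  -- the key identity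
  have hkey : ∀ α : Fin d → ℝ,
      m * ((α - μ) ⬝ᵥ Q.mulVec (α - μ)) + (1 - m) * ((α - μs) ⬝ᵥ Qs.mulVec (α - μs))
        = α ⬝ᵥ A.mulVec α - 2 * (w ⬝ᵥ α) + K := by
    intro α
    rw [quad_expand Q hQ.1 α μ, quad_expand Qs hQs.1 α μs]
    have hquad : α ⬝ᵥ A.mulVec α
        = m * (α ⬝ᵥ Q.mulVec α) + (1 - m) * (α ⬝ᵥ Qs.mulVec α) := by
      rw [hAdef, Matrix.add_mulVec, Matrix.smul_mulVec, Matrix.smul_mulVec,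
        dotProduct_add, dotProduct_smul, dotProduct_smul]
      simp [smul_eq_mul]
    have hw : w ⬝ᵥ α = m * (Q.mulVec μ ⬝ᵥ α) + (1 - m) * (Qs.mulVec μs ⬝ᵥ α) := by
      rw [hwdef, add_dotProduct, smul_dotProduct, smul_dotProduct]
      simp [smul_eq_mul]
    rw [hquad, hw, hKdef]
    ring
  -- the exponent of the integrand
  set E : (Fin d → ℝ) → ℝ := fun α => m * (l α + u α - v α) + v α with hEdef
  set C0 : ℝ := (c₁ / c₂) ^ m * c₂ with hC0def
  have hC0 : 0 < C0 := mul_pos (Real.rpow_pos_of_pos (by positivity) m) hc₂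
  -- the integrand equals C0 * exp (E α)
  have hFeq : ∀ α : Fin d → ℝ,
      (Real.exp (l α) * gaussDensity μ Q α / gaussDensity μs Qs α) ^ m *
        gaussDensity μs Qs α = C0 * Real.exp (E α) := by
    intro α
    have hg1 : gaussDensity μ Q α = c₁ * Real.exp (u α) := rfl
    have hg2 : gaussDensity μs Qs α = c₂ * Real.exp (v α) := rfl
    have hbase : Real.exp (l α) * gaussDensity μ Q α / gaussDensity μs Qs α
        = (c₁ / c₂) * Real.exp (l α + u α - v α) := by
      rw [hg1, hg2, Real.exp_sub, Real.exp_add]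
      field_simp
    rw [hbase, hg2, Real.mul_rpow (by positivity) (Real.exp_nonneg _),
      ← Real.exp_mul, hC0def, hEdef, Real.exp_add]
    ring_nf
  -- continuity of the quadratic exponents
  have hu : Continuous u := by
    simp only [hudef, dotProduct, Matrix.mulVec, Pi.sub_apply]
    fun_prop
  have hv : Continuous v := by
    simp only [hvdef, dotProduct, Matrix.mulVec, Pi.sub_apply]
    fun_prop
  have hE : Measurable E := by
    apply Measurable.add _ hv.measurable
    exact (((hl.add hu.measurable).sub hv.measurable).const_mul m)
  -- the exponent bound
  have hEle : ∀ α : Fin d → ℝ,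
      E α ≤ (m * k - K / 2) + ∑ i, (b i * α i - c / 2 * (α i) ^ 2) := by
    intro α
    have h1 : m * l α ≤ m * (k + δ ⬝ᵥ α) := mul_le_mul_of_nonneg_left (hbound α) hm
    have h2 := hcq α
    have h3 := hkey α
    have hδ : δ ⬝ᵥ α = ∑ i, δ i * α i := rfl
    have hw' : w ⬝ᵥ α = ∑ i, w i * α i := rfl
    have hsplit : ∑ i, (b i * α i - c / 2 * (α i) ^ 2)
        = m * ∑ i, δ i * α i + ∑ i, w i * α i - c / 2 * ∑ i, (α i) ^ 2 := by
      rw [Finset.sum_sub_distrib, Finset.mul_sum, Finset.mul_sum, ← Finset.sum_add_distrib]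
      congr 1
      apply Finset.sum_congr rfl
      intro i _
      rw [hbdef]
      ring
    have hEeq : E α = m * l α - (1/2) * (m * ((α - μ) ⬝ᵥ Q.mulVec (α - μ))
        + (1 - m) * ((α - μs) ⬝ᵥ Qs.mulVec (α - μs))) := by
      simp only [hEdef, hudef, hvdef]
      ring
    rw [hEeq, h3, hsplit, hw']
    rw [hδ] at h1
    linarith
  -- bounding function
  set C1 : ℝ := C0 * Real.exp (m * k - K / 2) with hC1def
  have hFle : ∀ α : Fin d → ℝ,
      C0 * Real.exp (E α) ≤ C1 * ∏ i, Real.exp (b i * α i - c / 2 * (α i) ^ 2) := by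
    intro α
    calc C0 * Real.exp (E α)
        ≤ C0 * Real.exp (m * k - K / 2 + ∑ i, (b i * α i - c / 2 * (α i) ^ 2)) :=
          mul_le_mul_of_nonneg_left (Real.exp_le_exp.2 (hEle α)) hC0.le
      _ = C1 * ∏ i, Real.exp (b i * α i - c / 2 * (α i) ^ 2) := by
          rw [hC1def, Real.exp_add, ← Real.exp_sum]
          ring
  -- the bounding function is integrable
  have hint : ∀ i, Integrable (fun t : ℝ => Real.exp (b i * t - c / 2 * t ^ 2)) :=
    fun i => integrable_exp_linear_sub_sq (c / 2) (half_pos hc) (b i)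
  have hG : Integrable (fun α : Fin d → ℝ =>
      C1 * ∏ i, Real.exp (b i * (α i) - c / 2 * (α i) ^ 2)) :=
    (Integrable.fintype_prod (f := fun i t => Real.exp (b i * t - c / 2 * t ^ 2)) hint).const_mul C1
  -- hence the integrand is integrable
  have hF' : Integrable (fun α : Fin d → ℝ => C0 * Real.exp (E α)) := by
    apply hG.mono' ((hE.exp.const_mul C0).aestronglyMeasurable)
    apply Filter.Eventually.of_forall
    intro α
    rw [Real.norm_of_nonneg (mul_nonneg hC0.le (Real.exp_nonneg _))]
    exact hFle α
  have hre : ∫⁻ α, ENNReal.ofReal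
        ((Real.exp (l α) * gaussDensity μ Q α / gaussDensity μs Qs α) ^ m *
          gaussDensity μs Qs α)
      = ∫⁻ α, ENNReal.ofReal (C0 * Real.exp (E α)) :=
    lintegral_congr fun α => by rw [hFeq α]
  rw [hre]
  exact hF'.lintegral_lt_top
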